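/- Let n ≥ 2 and let S be an n-simplex with vertices A_0,…,A_n in a Euclidean space such that the facet {A_1,…,A_n} is regular (so S is an n-pre-kite with apex A_0). If the circumcenter of S coincides with the centroid of its vertices, then S is regular, i.e., all pairwise distances ‖A_i − A_j‖, 0 ≤ i < j ≤ n, are equal. -/

import Mathlib

open Finset

/-- An `n`-pre-kite whose circumcenter coincides with the centroid of its
vertices is regular. -/
theorem stmt_14 {E : Type*} [NormedAddCommGroup E] [InnerProductSpace ℝ E]
    (n : ℕ) (hn : 2 ≤ n) (A : Fin (n + 1) → E) (u : ℝ)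
    (hA : AffineIndependent ℝ A)
    (hfacet : ∀ i j : Fin (n + 1), i ≠ 0 → j ≠ 0 → i ≠ j →
      dist (A i) (A j) = u)
    (hcc : ∃ R, ∀ i, dist (Finset.centroid ℝ Finset.univ A) (A i) = R) :
    ∃ c, ∀ i j : Fin (n + 1), i ≠ j → dist (A i) (A j) = c := by
  obtain ⟨R, hR⟩ := hcc
  set G := Finset.centroid ℝ Finset.univ A with hGdef
  -- G is a convex combination; sum of deviations is zero
  have hcard : (Finset.univ : Finset (Fin (n+1))).card = n+1 := by simp
  have hG : G = ∑ i, ((n+1 : ℝ))⁻¹ • A i := by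
    rw [hGdef, Finset.centroid_def,
      Finset.affineCombination_eq_linear_combination _ _ _ (by
        simp [Finset.centroidWeights_apply, hcard]
        rw [mul_inv_cancel₀]
        positivity)]
    simp [Finset.centroidWeights_apply, hcard]
  have hsum : ∑ i, (A i - G) = 0 := by
    rw [Finset.sum_sub_distrib, Finset.sum_const, hcard, hG, ← Finset.smul_sum,
      ← Nat.cast_smul_eq_nsmul ℝ, smul_smul]
    rw [show ((n+1 : ℕ) : ℝ) * ((n+1 : ℝ))⁻¹ = 1 by
      push_cast; rw [mul_inv_cancel₀]; positivity]
    simp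
  have hnorm : ∀ i, ‖A i - G‖ = R := fun i => by
    rw [← dist_eq_norm, dist_comm]; exact hR i
  -- every row-sum of squared distances equals 2(n+1)R²
  have key : ∀ i, ∑ j, ‖A i - A j‖^2 = 2*(n+1)*R^2 := by
    intro i
    have h1 : ∀ j, ‖A i - A j‖^2
        = 2*R^2 - 2*(inner ℝ (A i - G) (A j - G) : ℝ) := by
      intro j
      have h2 : A i - A j = (A i - G) - (A j - G) := by abel
      rw [h2, norm_sub_sq_real, hnorm, hnorm]; ring
    simp_rw [h1]
    have h2 : ∑ x, (2:ℝ) * inner ℝ (A i - G) (A x - G) = 0 := by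
      rw [← Finset.mul_sum, ← inner_sum, hsum, inner_zero_right, mul_zero]
    rw [Finset.sum_sub_distrib, h2, Finset.sum_const, hcard]
    simp
    ring
  have hn1 : ((n - 1 : ℕ) : ℝ) = (n : ℝ) - 1 := by
    rw [Nat.cast_sub (by omega)]; norm_num
  -- rows i ≠ 0
  have row : ∀ i : Fin (n+1), i ≠ 0 →
      ‖A i - A 0‖^2 = 2*(n+1)*R^2 - ((n:ℝ)-1)*u^2 := by
    intro i hi
    have hkey := key i
    set f : Fin (n+1) → ℝ := fun j => ‖A i - A j‖^2 with hf
    have hi' : i ∈ (Finset.univ : Finset (Fin (n+1))).erase 0 :=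
      Finset.mem_erase.mpr ⟨hi, Finset.mem_univ i⟩
    have e1 : ∑ j, f j = f 0 + ∑ j ∈ Finset.univ.erase 0, f j :=
      (Finset.add_sum_erase _ f (Finset.mem_univ 0)).symm
    have e2 : ∑ j ∈ Finset.univ.erase 0, f j
        = f i + ∑ j ∈ (Finset.univ.erase 0).erase i, f j :=
      (Finset.add_sum_erase _ f hi').symm
    have e3 : ∑ j ∈ (Finset.univ.erase 0).erase i, f j
        = ∑ j ∈ (Finset.univ.erase 0).erase i, u^2 :=
      Finset.sum_congr rfl (fun j hj => by
        obtain ⟨hji, hj0⟩ : j ≠ i ∧ j ≠ 0 := by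
          simpa [Finset.mem_erase] using hj
        show ‖A i - A j‖^2 = u^2
        rw [← dist_eq_norm, hfacet i j hi hj0 (Ne.symm hji)])
    have ecard : ((Finset.univ.erase 0 : Finset (Fin (n+1))).erase i).card = n - 1 := by
      rw [Finset.card_erase_of_mem hi', Finset.card_erase_of_mem (Finset.mem_univ 0),
        hcard]
      omega
    have e3' : ∑ _j ∈ (Finset.univ.erase 0 : Finset (Fin (n+1))).erase i, u^2
        = ((n:ℝ)-1)*u^2 := by
      rw [Finset.sum_const, ecard, nsmul_eq_mul, hn1]
    have e4 : f i = 0 := by simp [hf]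
    have e5 : f 0 = ‖A i - A 0‖^2 := rfl
    rw [e1, e2, e3, e3', e4] at hkey
    linarith [e5, hkey]
  -- row 0
  have row0 : (n : ℝ) * (2*(n+1)*R^2 - ((n:ℝ)-1)*u^2) = 2*(n+1)*R^2 := by
    have hkey := key 0
    have e1 : ∑ j, ‖A 0 - A j‖^2
        = ‖A 0 - A 0‖^2 + ∑ j ∈ Finset.univ.erase 0, ‖A 0 - A j‖^2 :=
      (Finset.add_sum_erase _ _ (Finset.mem_univ 0)).symm
    have e3 : ∑ j ∈ Finset.univ.erase 0, ‖A 0 - A j‖^2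
        = ∑ _j ∈ (Finset.univ.erase 0 : Finset (Fin (n+1))), (2*(n+1)*R^2 - ((n:ℝ)-1)*u^2) :=
      Finset.sum_congr rfl (fun j hj => by
        have hj0 : j ≠ 0 := (Finset.mem_erase.mp hj).1
        rw [norm_sub_rev]
        exact row j hj0)
    have ecard : ((Finset.univ.erase 0 : Finset (Fin (n+1)))).card = n := by
      rw [Finset.card_erase_of_mem (Finset.mem_univ 0), hcard]
      omega
    have e3' : ∑ _j ∈ (Finset.univ.erase 0 : Finset (Fin (n+1))), (2*(n+1)*R^2 - ((n:ℝ)-1)*u^2)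
        = (n:ℝ) * (2*(n+1)*R^2 - ((n:ℝ)-1)*u^2) := by
      rw [Finset.sum_const, ecard, nsmul_eq_mul]
    rw [e1, e3, e3'] at hkey
    simp at hkey
    linarith
  -- deduce K = u²
  have hK : 2*(n+1)*R^2 - ((n:ℝ)-1)*u^2 = u^2 := by
    have hne : (n : ℝ) - 1 ≠ 0 := by
      have : (2:ℝ) ≤ n := by exact_mod_cast hn
      linarith
    have expand : ((n:ℝ)-1) * ((2*(n+1)*R^2 - ((n:ℝ)-1)*u^2) - u^2)
        = ((n : ℝ) * (2*(n+1)*R^2 - ((n:ℝ)-1)*u^2) - (2*(n+1)*R^2 - ((n:ℝ)-1)*u^2))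
          - ((n:ℝ)-1)*u^2 := by ring
    have h0 : ((n:ℝ)-1) * ((2*(n+1)*R^2 - ((n:ℝ)-1)*u^2) - u^2) = 0 := by
      rw [expand, row0]; ring
    rcases mul_eq_zero.mp h0 with h | h
    · exact absurd h hne
    · linarith
  -- u ≥ 0
  have h1ne : (⟨1, by omega⟩ : Fin (n+1)) ≠ 0 := by simp [Fin.ext_iff]
  have h2ne : (⟨2, by omega⟩ : Fin (n+1)) ≠ 0 := by simp [Fin.ext_iff]
  have h12 : (⟨1, by omega⟩ : Fin (n+1)) ≠ ⟨2, by omega⟩ := by simp [Fin.ext_iff]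
  have hu : 0 ≤ u := by
    rw [← hfacet _ _ h1ne h2ne h12]
    exact dist_nonneg
  -- final
  have hdist : ∀ i : Fin (n+1), i ≠ 0 → dist (A i) (A 0) = u := by
    intro i hi
    have hsq : dist (A i) (A 0)^2 = u^2 := by
      rw [dist_eq_norm, row i hi, hK]
    rw [← Real.sqrt_sq (dist_nonneg (x := A i) (y := A 0)), hsq, Real.sqrt_sq hu]
  refine ⟨u, fun i j hij => ?_⟩
  rcases eq_or_ne i 0 with rfl | hi
  · rw [dist_comm]; exact hdist j (Ne.symm hij)
  rcases eq_or_ne j 0 with rfl | hj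
  · exact hdist i hi
  exact hfacet i j hi hj hij
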